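/- With R_b(t,x) = R_0 e^{2t} cosh(2x), W_b(x) = W_1 + W_0 arctan(e^{2x}), q_b = q_0, the function a_b(t,x) = a_0 − (1/2 + W_0²/2)(1/2) ln(cosh(2x)) + (3/2 + W_0²/2) t satisfies the wave equation a_tt − a_xx + (R_x² − R_t²)/(4R²) + W_t² − W_x² + (1/4)(q_t² − q_x²)e^{−4W} = 0, with (R,W,q) = (R_b,W_b,q_b). -/

import Mathlib

open Real MeasureTheory Filter

noncomputable def pt (u : ℝ → ℝ → ℝ) : ℝ → ℝ → ℝ := fun t x => deriv (fun s => u s x) t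
noncomputable def px (u : ℝ → ℝ → ℝ) : ℝ → ℝ → ℝ := fun t x => deriv (fun y => u t y) x

/-- the conformal factor $a_b$ of the double-cusp solution
satisfies its evolution equation. -/
theorem statement4 (R₀ W₀ W₁ q₀ a₀ : ℝ) (hR₀ : 0 < R₀)
    (Rb Wb qb ab : ℝ → ℝ → ℝ)
    (hRb : Rb = fun t x => R₀ * Real.exp (2 * t) * Real.cosh (2 * x))
    (hWb : Wb = fun _ x => W₁ + W₀ * Real.arctan (Real.exp (2 * x)))
    (hqb : qb = fun _ _ => q₀)
    (hab : ab = fun t x => a₀ - (1 / 2 + W₀ ^ 2 / 2) * (1 / 2) * Real.log (Real.cosh (2 * x))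
        + (3 / 2 + W₀ ^ 2 / 2) * t) :
    ∀ t x, pt (pt ab) t x - px (px ab) t x
        + ((px Rb t x) ^ 2 - (pt Rb t x) ^ 2) / (4 * (Rb t x) ^ 2)
        + (pt Wb t x) ^ 2 - (px Wb t x) ^ 2
        + (1 / 4) * ((pt qb t x) ^ 2 - (px qb t x) ^ 2) * Real.exp (-(4 * Wb t x)) = 0 := by
  intro t x
  have h2y : ∀ y : ℝ, HasDerivAt (fun z : ℝ => 2 * z) 2 y := fun y => by
    simpa using (hasDerivAt_id y).const_mul 2
  have hcosh : ∀ y : ℝ, HasDerivAt (fun z : ℝ => Real.cosh (2 * z)) (2 * Real.sinh (2 * y)) y :=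
    fun y => by
      have := (Real.hasDerivAt_cosh (2 * y)).comp y (h2y y)
      simpa [Function.comp_def, mul_comm] using this
  have hsinh : ∀ y : ℝ, HasDerivAt (fun z : ℝ => Real.sinh (2 * z)) (2 * Real.cosh (2 * y)) y :=
    fun y => by
      have := (Real.hasDerivAt_sinh (2 * y)).comp y (h2y y)
      simpa [Function.comp_def, mul_comm] using this
  have hexp : ∀ y : ℝ, HasDerivAt (fun z : ℝ => Real.exp (2 * z)) (2 * Real.exp (2 * y)) y :=
    fun y => by
      have := (Real.hasDerivAt_exp (2 * y)).comp y (h2y y)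
      simpa [Function.comp_def, mul_comm] using this
  have hcoshpos : ∀ y : ℝ, 0 < Real.cosh (2 * y) := fun y => Real.cosh_pos (2 * y)
  -- pt ab
  have hptab : pt ab = fun _ _ => (3 / 2 + W₀ ^ 2 / 2 : ℝ) := by
    funext s y
    simp only [pt, hab]
    have : HasDerivAt (fun s : ℝ => a₀ - (1 / 2 + W₀ ^ 2 / 2) * (1 / 2) * Real.log (Real.cosh (2 * y))
        + (3 / 2 + W₀ ^ 2 / 2) * s) (3 / 2 + W₀ ^ 2 / 2) s := by
      simpa using (hasDerivAt_id s).const_mul (3 / 2 + W₀ ^ 2 / 2)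
    exact this.deriv
  have hptptab : pt (pt ab) t x = 0 := by
    rw [hptab]; simp [pt]
  -- px ab
  have hlogcosh : ∀ y : ℝ, HasDerivAt (fun z : ℝ => Real.log (Real.cosh (2 * z)))
      (2 * Real.sinh (2 * y) / Real.cosh (2 * y)) y := fun y =>
    (hcosh y).log (ne_of_gt (hcoshpos y))
  have hpxab : px ab = fun _ y =>
      -((1 / 2 + W₀ ^ 2 / 2) * (1 / 2)) * (2 * Real.sinh (2 * y) / Real.cosh (2 * y)) := by
    funext s y
    simp only [px, hab]
    have : HasDerivAt (fun z : ℝ => a₀ - (1 / 2 + W₀ ^ 2 / 2) * (1 / 2) * Real.log (Real.cosh (2 * z))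
        + (3 / 2 + W₀ ^ 2 / 2) * s)
        (-((1 / 2 + W₀ ^ 2 / 2) * (1 / 2)) * (2 * Real.sinh (2 * y) / Real.cosh (2 * y))) y := by
      have := ((hasDerivAt_const y a₀).sub (((hlogcosh y).const_mul ((1 / 2 + W₀ ^ 2 / 2) * (1 / 2))))).add
        (hasDerivAt_const y ((3 / 2 + W₀ ^ 2 / 2) * s))
      refine this.congr_deriv ?_
      ring
    exact this.deriv
  have hpxpxab : px (px ab) t x = -((1 / 2 + W₀ ^ 2 / 2)) * (2 / Real.cosh (2 * x) ^ 2) := by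
    rw [show px (px ab) t x = deriv (fun y => px ab t y) x from rfl, hpxab]
    have hnum : HasDerivAt (fun z : ℝ => 2 * Real.sinh (2 * z)) (2 * (2 * Real.cosh (2 * x))) x :=
      (hsinh x).const_mul 2
    have hdiv : HasDerivAt (fun z : ℝ => 2 * Real.sinh (2 * z) / Real.cosh (2 * z))
        ((2 * (2 * Real.cosh (2 * x)) * Real.cosh (2 * x)
          - 2 * Real.sinh (2 * x) * (2 * Real.sinh (2 * x))) / Real.cosh (2 * x) ^ 2) x :=
      hnum.div (hcosh x) (ne_of_gt (hcoshpos x))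
    have h3 := hdiv.const_mul (-((1 / 2 + W₀ ^ 2 / 2) * (1 / 2)))
    have hc : Real.cosh (2 * x) ^ 2 - Real.sinh (2 * x) ^ 2 = 1 := Real.cosh_sq_sub_sinh_sq (2 * x)
    have hval : -((1 / 2 + W₀ ^ 2 / 2) * (1 / 2)) *
        ((2 * (2 * Real.cosh (2 * x)) * Real.cosh (2 * x)
          - 2 * Real.sinh (2 * x) * (2 * Real.sinh (2 * x))) / Real.cosh (2 * x) ^ 2)
        = -((1 / 2 + W₀ ^ 2 / 2)) * (2 / Real.cosh (2 * x) ^ 2) := by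
      have : 2 * (2 * Real.cosh (2 * x)) * Real.cosh (2 * x)
          - 2 * Real.sinh (2 * x) * (2 * Real.sinh (2 * x)) = 4 := by nlinarith [hc]
      rw [this]; ring
    rw [← hval]
    exact h3.deriv
  -- Rb
  have hptRb : pt Rb t x = 2 * (R₀ * Real.exp (2 * t) * Real.cosh (2 * x)) := by
    simp only [pt, hRb]
    have h := ((hexp t).const_mul R₀).mul_const (Real.cosh (2 * x))
    have : HasDerivAt (fun s : ℝ => R₀ * Real.exp (2 * s) * Real.cosh (2 * x))
        (2 * (R₀ * Real.exp (2 * t) * Real.cosh (2 * x))) t := by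
      refine h.congr_deriv ?_; ring
    exact this.deriv
  have hpxRb : px Rb t x = R₀ * Real.exp (2 * t) * (2 * Real.sinh (2 * x)) := by
    simp only [px, hRb]
    exact (((hcosh x).const_mul (R₀ * Real.exp (2 * t)))).deriv
  -- Wb
  have hptWb : pt Wb t x = 0 := by simp [pt, hWb]
  have hpxWb : px Wb t x = W₀ / Real.cosh (2 * x) := by
    simp only [px, hWb]
    have harc : HasDerivAt (fun z : ℝ => Real.arctan (Real.exp (2 * z)))
        (1 / (1 + Real.exp (2 * x) ^ 2) * (2 * Real.exp (2 * x))) x :=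
      (hexp x).arctan.congr_deriv (by ring)
    have : HasDerivAt (fun z : ℝ => W₁ + W₀ * Real.arctan (Real.exp (2 * z)))
        (W₀ / Real.cosh (2 * x)) x := by
      have h := (hasDerivAt_const x W₁).add (harc.const_mul W₀)
      refine h.congr_deriv ?_
      have hc : Real.cosh (2 * x) = (Real.exp (2 * x) + Real.exp (-(2 * x))) / 2 := Real.cosh_eq (2 * x)
      have he : Real.exp (-(2 * x)) = (Real.exp (2 * x))⁻¹ := Real.exp_neg (2 * x)
      have hep : (0:ℝ) < Real.exp (2 * x) := Real.exp_pos _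
      rw [hc, he]
      have h1 : (1:ℝ) + Real.exp (2 * x) ^ 2 > 0 := by positivity
      field_simp
      ring
    exact this.deriv
  have hptqb : pt qb t x = 0 := by simp [pt, hqb]
  have hpxqb : px qb t x = 0 := by simp [px, hqb]
  rw [hptptab, hpxpxab, hptRb, hpxRb, hptWb, hpxWb, hptqb, hpxqb, hRb]
  have hc : Real.cosh (2 * x) ^ 2 - Real.sinh (2 * x) ^ 2 = 1 := Real.cosh_sq_sub_sinh_sq (2 * x)
  have hcp : (0:ℝ) < Real.cosh (2 * x) := hcoshpos x
  have hep : (0:ℝ) < Real.exp (2 * t) := Real.exp_pos _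
  have hRe : R₀ * Real.exp (2 * t) ≠ 0 := by positivity
  field_simp
  ring_nf
  have hc' : Real.cosh (x * 2) ^ 2 - Real.sinh (x * 2) ^ 2 = 1 := by
    rw [mul_comm]; exact hc
  nlinarith [hc', sq_nonneg (R₀ * Real.exp (t * 2) * Real.cosh (x * 2) ^ 2)]
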